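/- Conversely, if x : ℝ → ℝ is a continuously differentiable ω-periodic solution of x'(t) = -a(t)x(t) + λ b(t) f(x(t-τ(t))), then x(t) = λ ∫_t^{t+ω} G(t,s) b(s) f(x(s-τ(s))) ds for all t, where G(t,s) = exp(∫_t^s a)/(exp(āω)-1). -/

import Mathlib

/-- A periodic solution of the delay differential equation is a fixed point of the
integral operator. -/
theorem stmt_5 (a b τ f x : ℝ → ℝ) (ω abar lam : ℝ) (G : ℝ → ℝ → ℝ)
    (hω : 0 < ω) (ha : Continuous a) (haper : Function.Periodic a ω)
    (hb : Continuous b) (hbper : Function.Periodic b ω)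
    (hf : Continuous f) (hτ : Continuous τ) (hτper : Function.Periodic τ ω)
    (habar : abar = (1 / ω) * ∫ s in (0:ℝ)..ω, a s) (habar_pos : 0 < abar)
    (hlam : 0 < lam)
    (hG : ∀ t s, G t s = Real.exp (∫ θ in t..s, a θ) / (Real.exp (abar * ω) - 1))
    (hx : ContDiff ℝ 1 x) (hxper : Function.Periodic x ω)
    (hode : ∀ t, deriv x t = -a t * x t + lam * (b t * f (x (t - τ t)))) :
    ∀ t, x t = lam * ∫ s in t..t + ω, G t s * (b s * f (x (s - τ s))) := by
  intro t
  have hxc : Continuous x := hx.continuous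
  have hxd : Differentiable ℝ x := hx.differentiable one_ne_zero
  set g : ℝ → ℝ := fun s => b s * f (x (s - τ s)) with hg
  have hgc : Continuous g := hb.mul (hf.comp (hxc.comp (continuous_id.sub hτ)))
  set A : ℝ → ℝ := fun s => ∫ θ in (0:ℝ)..s, a θ with hAdef
  have hA : ∀ s, HasDerivAt A (a s) s := fun s =>
    intervalIntegral.integral_hasDerivAt_right (ha.intervalIntegrable _ _)
      (ha.stronglyMeasurableAtFilter _ _) ha.continuousAt
  have hAc : Continuous A := by
    rw [continuous_iff_continuousAt]
    exact fun s => (hA s).continuousAt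
  have hAsplit : ∀ s, ∫ θ in t..s, a θ = A s - A t := by
    intro s
    have h := intervalIntegral.integral_add_adjacent_intervals (μ := MeasureTheory.volume)
      (ha.intervalIntegrable 0 t) (ha.intervalIntegrable t s)
    simp only [hAdef]
    linarith
  have hAper : A (t + ω) = A t + abar * ω := by
    have h1 : ∫ θ in t..t + ω, a θ = ∫ θ in (0:ℝ)..0 + ω, a θ :=
      haper.intervalIntegral_add_eq t 0
    have h2 := hAsplit (t + ω)
    rw [h1] at h2
    simp only [zero_add] at h2
    have : abar * ω = ∫ θ in (0:ℝ)..ω, a θ := by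
      rw [habar]; field_simp
    rw [← this] at h2
    linarith
  set E : ℝ := Real.exp (abar * ω) with hE
  have hE1 : 1 < E := by
    rw [hE]
    exact Real.one_lt_exp_iff.mpr (by positivity)
  have hEne : E - 1 ≠ 0 := sub_ne_zero.mpr hE1.ne'
  -- the function y = exp(A s) * x s
  have hy : ∀ s, HasDerivAt (fun u => Real.exp (A u) * x u)
      (Real.exp (A s) * (lam * g s)) s := by
    intro s
    have h1 : HasDerivAt (fun u => Real.exp (A u)) (Real.exp (A s) * a s) s :=
      (Real.hasDerivAt_exp (A s)).comp s (hA s)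
    have h2 : HasDerivAt x (deriv x s) s := (hxd s).hasDerivAt
    have h : HasDerivAt (fun u => Real.exp (A u) * x u)
        (Real.exp (A s) * a s * x s + Real.exp (A s) * deriv x s) s := h1.mul h2
    convert h using 1
    rw [hode s]
    ring
  have hFTC : ∫ s in t..t + ω, Real.exp (A s) * (lam * g s)
      = Real.exp (A (t + ω)) * x (t + ω) - Real.exp (A t) * x t := by
    apply intervalIntegral.integral_eq_sub_of_hasDerivAt (fun s _ => hy s)
    exact (((Real.continuous_exp.comp hAc).mul
      ((continuous_const.mul hgc))).intervalIntegrable _ _)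
  have hkey : Real.exp (A (t + ω)) * x (t + ω) - Real.exp (A t) * x t
      = Real.exp (A t) * (E - 1) * x t := by
    rw [hAper, hxper t, Real.exp_add]
    ring
  calc x t = (Real.exp (-A t) / (E - 1)) * (Real.exp (A t) * (E - 1) * x t) := by
        rw [Real.exp_neg]
        field_simp
      _ = (Real.exp (-A t) / (E - 1)) *
          ∫ s in t..t + ω, Real.exp (A s) * (lam * g s) := by rw [hFTC, hkey]
      _ = lam * ∫ s in t..t + ω, G t s * (b s * f (x (s - τ s))) := by
        rw [← intervalIntegral.integral_const_mul, ← intervalIntegral.integral_const_mul]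
        apply intervalIntegral.integral_congr
        intro s _
        simp only
        rw [hG t s, hAsplit s, Real.exp_sub, Real.exp_neg]
        simp only [hg]
        field_simp
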